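/- Define sequences A and B by A(-1)=1, A(0)=2, B(-1)=0, B(0)=1, and for n≥1, A(n)=A(n-1)+(1/n)A(n-2), B(n)=B(n-1)+(1/n)B(n-2). Then A(n)=n+2 for all n≥0. -/

import Mathlib

theorem stmt0 (A B : ℤ → ℚ)
    (hA1 : A (-1) = 1) (hA0 : A 0 = 2) (hB1 : B (-1) = 0) (hB0 : B 0 = 1)
    (hArec : ∀ n : ℤ, 1 ≤ n → A n = A (n - 1) + (1 / (n : ℚ)) * A (n - 2))
    (hBrec : ∀ n : ℤ, 1 ≤ n → B n = B (n - 1) + (1 / (n : ℚ)) * B (n - 2)) :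
    ∀ n : ℤ, 0 ≤ n → A n = (n : ℚ) + 2 := by
  have key : ∀ n : ℤ, 0 ≤ n → A n = (n : ℚ) + 2 ∧ A (n - 1) = (n : ℚ) + 1 := by
    intro n hn
    refine Int.le_induction (motive := fun m _ => A m = (m : ℚ) + 2 ∧ A (m - 1) = (m : ℚ) + 1) ?_ (fun n hn ih => ?_) n hn
    · constructor
      · rw [hA0]; norm_num
      · norm_num [hA1]
    · obtain ⟨h1, h2⟩ := ih
      have hpos : (1 : ℤ) ≤ n + 1 := by omega
      have hne : ((n : ℚ) + 1) ≠ 0 := by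
        have : (0 : ℚ) ≤ (n : ℚ) := by exact_mod_cast hn
        linarith
      have hrec := hArec (n + 1) hpos
      simp only [add_sub_cancel_right] at hrec
      have h3 : A (n + 1 - 2) = A (n - 1) := by ring_nf
      rw [h3, h1, h2] at hrec
      push_cast at hrec ⊢
      refine ⟨?_, by rw [show ((n:ℤ)+1-1) = n by ring, h1]; ring⟩
      rw [hrec]; field_simp; ring
  exact fun n hn => (key n hn).1
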